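/- Fix r ≥ 1 and N > 1. If a positive real x satisfies x^(1/r)(1+x)²/(1+(1+r)x) = Ψ/V with Ψ/V ≥ N(N−1)^(1/r), then x ≥ N−1 (equivalently, x/(1+x) ≥ 1 − 1/N). -/
import Mathlib


open Real

theorem largePsi_lower_bound (r N Ψ V x : ℝ) (hr : 1 ≤ r) (hN : 1 < N)
    (hV : 0 < V) (hx : 0 < x)
    (heq : x ^ (1 / r) * (1 + x) ^ 2 / (1 + (1 + r) * x) = Ψ / V)
    (hk : N * (N - 1) ^ (1 / r) ≤ Ψ / V) :
    N - 1 ≤ x ∧ 1 - 1 / N ≤ x / (1 + x) := by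
  have hr0 : (0:ℝ) < r := lt_of_lt_of_le one_pos hr
  have h1r : (0:ℝ) < 1 / r := by positivity
  have hden : (0:ℝ) < 1 + (1 + r) * x := by nlinarith
  have hmain : N - 1 ≤ x := by
    by_contra h
    push_neg at h
    have hxp : (0:ℝ) < x ^ (1 / r) := Real.rpow_pos_of_pos hx _
    have h1 : x ^ (1 / r) * (1 + x) ^ 2 / (1 + (1 + r) * x) ≤ x ^ (1 / r) * (1 + x) := by
      rw [div_le_iff₀ hden]
      nlinarith [mul_nonneg (mul_nonneg hxp.le (by linarith : (0:ℝ) ≤ 1 + x)) (mul_nonneg (by linarith : (0:ℝ) ≤ r) hx.le)]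
    have h2 : x ^ (1 / r) < (N - 1) ^ (1 / r) :=
      Real.rpow_lt_rpow hx.le h h1r
    have hpos : (0:ℝ) < (N - 1) ^ (1 / r) := Real.rpow_pos_of_pos (by linarith) _
    have h3 : x ^ (1 / r) * (1 + x) < N * (N - 1) ^ (1 / r) := by
      nlinarith [h2, h, hpos, hxp]
    rw [heq] at h1
    linarith
  refine ⟨hmain, ?_⟩
  have h1x : (0:ℝ) < 1 + x := by linarith
  have hN0 : (0:ℝ) < N := by linarith
  rw [show (1:ℝ) - 1 / N = (N - 1) / N by field_simp, div_le_div_iff₀ hN0 h1x]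
  nlinarith
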